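/- Let (X,d_X) and (Y,d_Y) be metric spaces, let n ≥ 1 be an integer, let F: X → Y be any map, and let S ⊆ X satisfy Hⁿ(S) < ∞, where Hⁿ is the n-dimensional Hausdorff (outer) measure on X. Suppose there exist ε > 0 and r̄ > 0 such that H^n_∞(F(S ∩ B_r(p))) ≤ ε·rⁿ for every p ∈ S and every r ∈ (0, r̄), where H^n_∞ denotes the n-dimensional Hausdorff content on Y. Then H^n_∞(F(S)) ≤ 2ⁿ·ω_n^{−1}·ε·Hⁿ(S). -/

import Mathlib

open MeasureTheory Filter Set Metric Topology
open scoped ENNReal NNReal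

noncomputable section

/-- `ω_k = π^{k/2} / Γ(1 + k/2)`, the volume of the unit ball of `ℝ^k` for integer `k`. -/
def omegaN (k : ℕ) : ℝ := Real.pi ^ ((k : ℝ) / 2) / Real.Gamma ((k : ℝ) / 2 + 1)

/-- The `n`-dimensional Hausdorff measure with the geometric normalization of the paper,
`Hⁿ(E) = lim_δ inf { Σ_i ω_n (diam E_i / 2)ⁿ }`; it equals `(ω_n/2ⁿ)` times Mathlib's
`μH[n]` (which uses the gauge `diamⁿ`). -/
def hausdorffPaper (X : Type*) [EMetricSpace X] [MeasurableSpace X] [BorelSpace X]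
    (n : ℕ) : Measure X :=
  ENNReal.ofReal (omegaN n / 2 ^ n) • μH[(n : ℝ)]

/-- The `n`-dimensional Hausdorff content,
`H^n_∞(A) = inf { Σ_i ω_n (diam E_i / 2)ⁿ : A ⊆ ⋃_i E_i }`. -/
def hContent {Y : Type*} [PseudoEMetricSpace Y] (n : ℕ) (A : Set Y) : ℝ≥0∞ :=
  ⨅ (E : ℕ → Set Y) (_ : A ⊆ ⋃ i, E i),
    ∑' i, ENNReal.ofReal (omegaN n) * (EMetric.diam (E i) / 2) ^ n

lemma omegaN_pos (k : ℕ) : 0 < omegaN k := by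
  have h1 : (0:ℝ) < Real.pi ^ ((k:ℝ)/2) := Real.rpow_pos_of_pos Real.pi_pos _
  have h2 : (0:ℝ) < Real.Gamma ((k:ℝ)/2 + 1) := Real.Gamma_pos_of_pos (by positivity)
  exact div_pos h1 h2

/-- Let `F : X → Y` be any map and `S ⊆ X` with `Hⁿ(S) < ∞`. If there
are `ε > 0` and `r̄ > 0` such that `H^n_∞(F(S ∩ B_r(p))) ≤ ε·rⁿ` for every `p ∈ S` and
`r ∈ (0,r̄)`, then `H^n_∞(F(S)) ≤ 2ⁿ·ω_n⁻¹·ε·Hⁿ(S)`. -/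
theorem statement12
    {X Y : Type*} [MetricSpace X] [MeasurableSpace X] [BorelSpace X] [MetricSpace Y]
    (n : ℕ) (hn : 1 ≤ n) (F : X → Y) (S : Set X)
    (hSfin : hausdorffPaper X n S < ⊤)
    (ε rbar : ℝ) (hε : 0 < ε) (hrbar : 0 < rbar)
    (h : ∀ p ∈ S, ∀ r : ℝ, 0 < r → r < rbar →
      hContent n (F '' (S ∩ Metric.ball p r)) ≤ ENNReal.ofReal (ε * r ^ n)) :
    hContent n (F '' S) ≤
      ENNReal.ofReal (2 ^ n * (omegaN n)⁻¹ * ε) * hausdorffPaper X n S := by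
  have hω := omegaN_pos n
  have hn0 : n ≠ 0 := by omega
  -- express hContent via an outer measure
  set m : Set Y → ℝ≥0∞ := fun E => ENNReal.ofReal (omegaN n) * (EMetric.diam E / 2) ^ n
    with hm
  have hm0 : m ∅ = 0 := by
    simp [hm, EMetric.diam_empty, ENNReal.zero_div, zero_pow hn0]
    exact Or.inr ⟨EMetric.diam_empty, hn0⟩
  set μ₀ : OuterMeasure Y := OuterMeasure.ofFunction m hm0 with hμ₀
  have hC : ∀ A : Set Y, hContent n A = μ₀ A := by
    intro A
    rw [hμ₀, OuterMeasure.ofFunction_apply]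
    rfl
  -- the paper measure as a multiple of μH
  have hpaper : hausdorffPaper X n S = ENNReal.ofReal (omegaN n / 2 ^ n) * μH[(n:ℝ)] S := by
    rw [hausdorffPaper, Measure.smul_apply, smul_eq_mul]
  have hμH : μH[(n:ℝ)] S < ⊤ := by
    rcases eq_or_ne (μH[(n:ℝ)] S) ⊤ with ht | ht
    · exfalso
      rw [hpaper, ht, ENNReal.mul_top (by
        simp only [ne_eq, ENNReal.ofReal_eq_zero, not_le]
        positivity)] at hSfin
      exact absurd hSfin (lt_irrefl _)
    · exact ht.lt_top
  -- main claim
  have main : hContent n (F '' S) ≤ ENNReal.ofReal ε * μH[(n:ℝ)] S := by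
    refine ENNReal.le_of_forall_pos_le_add fun η hη hfin => ?_
    obtain ⟨δ', hδ'pos, hδ'sum⟩ := ENNReal.exists_pos_sum_of_countable
      (show (η : ℝ≥0∞)/2 ≠ 0 by simp [hη.ne', ENNReal.div_eq_zero_iff]) ℕ
    set a' := ENNReal.ofReal ((η:ℝ) / (2*ε)) with ha'
    have ha'pos : 0 < a' := by
      rw [ha']
      exact ENNReal.ofReal_pos.2 (by positivity)
    -- get an efficient cover of S with small diameters
    have hinf : (⨅ (t : ℕ → Set X) (_ : S ⊆ ⋃ i, t i)
        (_ : ∀ i, EMetric.diam (t i) ≤ ENNReal.ofReal (rbar/2)),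
        ∑' i, ⨆ _ : (t i).Nonempty, EMetric.diam (t i) ^ (n:ℝ)) ≤ μH[(n:ℝ)] S := by
      rw [Measure.hausdorffMeasure_apply]
      refine le_iSup_of_le (ENNReal.ofReal (rbar/2)) ?_
      exact le_iSup_of_le (ENNReal.ofReal_pos.2 (by positivity)) le_rfl
    have hlt : (⨅ (t : ℕ → Set X) (_ : S ⊆ ⋃ i, t i)
        (_ : ∀ i, EMetric.diam (t i) ≤ ENNReal.ofReal (rbar/2)),
        ∑' i, ⨆ _ : (t i).Nonempty, EMetric.diam (t i) ^ (n:ℝ))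
        < μH[(n:ℝ)] S + a' :=
      lt_of_le_of_lt hinf (ENNReal.lt_add_right hμH.ne ha'pos.ne')
    simp only [iInf_lt_iff] at hlt
    obtain ⟨t, htcov, htdiam, htsum⟩ := hlt
    -- per-piece bound
    have key : ∀ i, μ₀ (F '' (S ∩ t i)) ≤
        ENNReal.ofReal ε * (⨆ _ : (t i).Nonempty, EMetric.diam (t i) ^ (n:ℝ))
          + (δ' i : ℝ≥0∞) := by
      intro i
      rcases (S ∩ t i).eq_empty_or_nonempty with he | ⟨p, hpS, hpt⟩
      · rw [he, Set.image_empty]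
        simpa using zero_le _
      have htne : (t i).Nonempty := ⟨p, hpt⟩
      have hdfin : EMetric.diam (t i) ≠ ⊤ :=
        (lt_of_le_of_lt (htdiam i) ENNReal.ofReal_lt_top).ne
      set d := (EMetric.diam (t i)).toReal with hd
      have hd0 : 0 ≤ d := ENNReal.toReal_nonneg
      have hdiam_eq : EMetric.diam (t i) = ENNReal.ofReal d := (ENNReal.ofReal_toReal hdfin).symm
      have hdr2 : d ≤ rbar/2 := by
        rw [hd]
        exact ENNReal.toReal_le_of_le_ofReal (by positivity) (htdiam i)
      have hdr : d < rbar := lt_of_le_of_lt hdr2 (by linarith)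
      -- choose a radius ρ slightly bigger than d
      have hcont : Tendsto (fun ρ : ℝ => ε * ρ^n) (𝓝[>] d) (𝓝 (ε * d^n)) :=
        ((continuous_const.mul (continuous_pow n)).tendsto d).mono_left nhdsWithin_le_nhds
      have hev1 : ∀ᶠ ρ in 𝓝[>] d, ε * ρ^n < ε * d^n + (δ' i : ℝ) :=
        hcont.eventually_lt_const (by
          have : (0:ℝ) < δ' i := hδ'pos i
          linarith)
      have hev2 : ∀ᶠ ρ in 𝓝[>] d, ρ < rbar :=
        eventually_nhdsWithin_of_eventually_nhds (Filter.Tendsto.eventually_lt_const hdr tendsto_id)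
      have hev3 : ∀ᶠ ρ in 𝓝[>] d, d < ρ := eventually_mem_nhdsWithin
      obtain ⟨ρ, h1, h2, h3⟩ := (hev1.and (hev2.and hev3)).exists
      have hρpos : 0 < ρ := lt_of_le_of_lt hd0 h3
      have hball : S ∩ t i ⊆ S ∩ Metric.ball p ρ := by
        rintro x ⟨hxS, hxt⟩
        refine ⟨hxS, ?_⟩
        rw [Metric.mem_ball, ← edist_lt_ofReal]
        calc edist x p ≤ EMetric.diam (t i) := EMetric.edist_le_diam_of_mem hxt hpt
          _ = ENNReal.ofReal d := hdiam_eq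
          _ < ENNReal.ofReal ρ := (ENNReal.ofReal_lt_ofReal_iff hρpos).2 h3
      calc μ₀ (F '' (S ∩ t i)) ≤ μ₀ (F '' (S ∩ Metric.ball p ρ)) :=
            μ₀.mono (Set.image_mono hball)
        _ = hContent n (F '' (S ∩ Metric.ball p ρ)) := (hC _).symm
        _ ≤ ENNReal.ofReal (ε * ρ^n) := h p hpS ρ hρpos h2
        _ ≤ ENNReal.ofReal (ε * d^n + (δ' i : ℝ)) := ENNReal.ofReal_le_ofReal h1.le
        _ = ENNReal.ofReal (ε * d^n) + ENNReal.ofReal ((δ' i : ℝ)) :=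
            ENNReal.ofReal_add (by positivity) (δ' i).coe_nonneg
        _ = ENNReal.ofReal ε * (⨆ _ : (t i).Nonempty, EMetric.diam (t i) ^ (n:ℝ))
              + (δ' i : ℝ≥0∞) := by
            rw [iSup_pos htne, hdiam_eq, ENNReal.rpow_natCast,
              ENNReal.ofReal_mul hε.le, ENNReal.ofReal_pow hd0,
              ENNReal.ofReal_coe_nnreal]
    have hFS : F '' S ⊆ ⋃ i, F '' (S ∩ t i) := by
      rintro _ ⟨x, hx, rfl⟩
      rcases Set.mem_iUnion.1 (htcov hx) with ⟨i, hi⟩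
      exact Set.mem_iUnion.2 ⟨i, ⟨x, ⟨hx, hi⟩, rfl⟩⟩
    have hhalf : ENNReal.ofReal ε * a' ≤ (η : ℝ≥0∞) / 2 := by
      rw [ha', ← ENNReal.ofReal_mul hε.le]
      have : ε * ((η:ℝ) / (2*ε)) = (η:ℝ)/2 := by field_simp
      rw [this, ENNReal.ofReal_div_of_pos (by norm_num), ENNReal.ofReal_coe_nnreal,
        ENNReal.ofReal_ofNat]
    calc hContent n (F '' S) = μ₀ (F '' S) := hC _
      _ ≤ μ₀ (⋃ i, F '' (S ∩ t i)) := μ₀.mono hFS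
      _ ≤ ∑' i, μ₀ (F '' (S ∩ t i)) := measure_iUnion_le _
      _ ≤ ∑' i, (ENNReal.ofReal ε * (⨆ _ : (t i).Nonempty, EMetric.diam (t i) ^ (n:ℝ))
            + (δ' i : ℝ≥0∞)) := ENNReal.tsum_le_tsum key
      _ = ENNReal.ofReal ε * (∑' i, ⨆ _ : (t i).Nonempty, EMetric.diam (t i) ^ (n:ℝ))
            + ∑' i, (δ' i : ℝ≥0∞) := by rw [ENNReal.tsum_add, ENNReal.tsum_mul_left]
      _ ≤ ENNReal.ofReal ε * (μH[(n:ℝ)] S + a') + (η : ℝ≥0∞)/2 :=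
          add_le_add (mul_le_mul_right htsum.le _) hδ'sum.le
      _ = ENNReal.ofReal ε * μH[(n:ℝ)] S + (ENNReal.ofReal ε * a' + (η : ℝ≥0∞)/2) := by
          rw [mul_add, add_assoc]
      _ ≤ ENNReal.ofReal ε * μH[(n:ℝ)] S + ((η : ℝ≥0∞)/2 + (η : ℝ≥0∞)/2) :=
          add_le_add_right (add_le_add_left hhalf _) _
      _ = ENNReal.ofReal ε * μH[(n:ℝ)] S + η := by rw [ENNReal.add_halves]
  -- conclude
  have hfinal : ENNReal.ofReal (2 ^ n * (omegaN n)⁻¹ * ε) * hausdorffPaper X n S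
      = ENNReal.ofReal ε * μH[(n:ℝ)] S := by
    rw [hpaper, ← mul_assoc, ← ENNReal.ofReal_mul (by positivity)]
    congr 2
    field_simp
  rw [hfinal]
  exact main

end
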